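/- If R is an η_ℓ-elementary ring, then the Jacobson radical of R is nonzero. -/

import Mathlib

/-- Left ideal of a (not necessarily unital) ring, as a set. -/
def IsLeftIdeal {R : Type*} [NonUnitalRing R] (L : Set R) : Prop :=
  0 ∈ L ∧ (∀ a ∈ L, ∀ b ∈ L, a + b ∈ L) ∧ (∀ a ∈ L, -a ∈ L) ∧
    ∀ (r : R), ∀ a ∈ L, r * a ∈ L

/-- `R` has a cover by `m` proper left ideals. -/
def HasLeftIdealCover (R : Type*) [NonUnitalRing R] (m : ℕ) : Prop :=
  ∃ L : Fin m → Set R, (∀ i, IsLeftIdeal (L i) ∧ L i ≠ Set.univ) ∧ ⋃ i, L i = Set.univ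

/-- The left ideal covering number `η_ℓ(R)`. -/
noncomputable def etaL (R : Type*) [NonUnitalRing R] : ℕ∞ :=
  sInf {n : ℕ∞ | ∃ k : ℕ, HasLeftIdealCover R k ∧ n = (k : ℕ∞)}

/-- `R` is `η_ℓ`-elementary. -/
def EtaLElementary (R : Type*) [NonUnitalRing R] : Prop :=
  etaL R ≠ ⊤ ∧ ∀ c : RingCon R, (∃ x : R, x ≠ 0 ∧ c x 0) → etaL R < etaL c.Quotient

/-- The circle operation `a ∘ b = a + b - ab`. -/
def circOp {R : Type*} [NonUnitalRing R] (a b : R) : R := a + b - a * b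

/-- `a` is left quasi-regular if it has a left inverse for `∘`. -/
def IsLeftQuasiRegular {R : Type*} [NonUnitalRing R] (a : R) : Prop :=
  ∃ b : R, circOp b a = 0

/-- The Jacobson radical of a not necessarily unital ring. -/
def jacobsonSet (R : Type*) [NonUnitalRing R] : Set R :=
  {a : R | ∀ r : R, IsLeftQuasiRegular (r * a)}

namespace EtaAux

variable {R : Type*} [NonUnitalRing R]

/-- A two-sided ideal, as a set. -/
structure IsTS (I : Set R) : Prop where
  zero : (0 : R) ∈ I
  add : ∀ a ∈ I, ∀ b ∈ I, a + b ∈ I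
  neg : ∀ a ∈ I, -a ∈ I
  lmul : ∀ (r : R), ∀ a ∈ I, r * a ∈ I
  rmul : ∀ a ∈ I, ∀ (r : R), a * r ∈ I

theorem IsTS.sub {I : Set R} (h : IsTS I) {a b : R} (ha : a ∈ I) (hb : b ∈ I) :
    a - b ∈ I := by
  rw [sub_eq_add_neg]; exact h.add _ ha _ (h.neg _ hb)

/-- The ring congruence associated to a two-sided ideal. -/
def toCon {I : Set R} (h : IsTS I) : RingCon R where
  r a b := a - b ∈ I
  iseqv := by
    refine ⟨fun a => by simpa using h.zero, fun {a b} hab => ?_, fun {a b c} hab hbc => ?_⟩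
    · rw [← neg_sub]; exact h.neg _ hab
    · have := h.add _ hab _ hbc
      rwa [sub_add_sub_cancel] at this
  add' := by
    intro a b c d h1 h2
    show a + c - (b + d) ∈ I
    have := h.add _ (show a - b ∈ I from h1) _ (show c - d ∈ I from h2)
    rwa [← add_sub_add_comm] at this
  mul' := by
    intro a b c d h1 h2
    have key : a * c - b * d = a * (c - d) + (a - b) * d := by
      rw [mul_sub, sub_mul]; abel
    have h1' : a - b ∈ I := h1
    show a * c - b * d ∈ I
    rw [key]
    exact h.add _ (h.lmul a _ (show c - d ∈ I from h2)) _ (h.rmul _ (show a - b ∈ I from h1) d)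

theorem toCon_iff {I : Set R} (h : IsTS I) (a b : R) : toCon h a b ↔ a - b ∈ I := Iff.rfl

theorem etaL_le_of_cover {k : ℕ} (h : HasLeftIdealCover R k) : etaL R ≤ (k : ℕ∞) :=
  sInf_le ⟨k, h, rfl⟩

theorem quot_surjective (c : RingCon R) :
    Function.Surjective (fun x : R => (x : c.Quotient)) := fun q =>
  Quotient.inductionOn' q (fun x => ⟨x, rfl⟩)

theorem hasCover_quotient {I : Set R} (hI : IsTS I) {ι : Type*} [Fintype ι]
    (L : ι → Set R) (hL : ∀ i, IsLeftIdeal (L i) ∧ L i ≠ Set.univ)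
    (hcov : ⋃ i, L i = Set.univ) (hsub : ∀ i, I ⊆ L i) :
    HasLeftIdealCover (toCon hI).Quotient (Fintype.card ι) := by
  classical
  set c := toCon hI with hc
  set e := (Fintype.equivFin ι).symm with he
  refine ⟨fun j => (fun x : R => (x : c.Quotient)) '' L (e j), fun j => ⟨⟨?_, ?_, ?_, ?_⟩, ?_⟩, ?_⟩
  · exact ⟨0, (hL (e j)).1.1, rfl⟩
  · rintro _ ⟨a, ha, rfl⟩ _ ⟨b, hb, rfl⟩
    exact ⟨a + b, (hL (e j)).1.2.1 _ ha _ hb, (RingCon.coe_add c a b)⟩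
  · rintro _ ⟨a, ha, rfl⟩
    exact ⟨-a, (hL (e j)).1.2.2.1 _ ha, (RingCon.coe_neg c a)⟩
  · intro r a ha
    obtain ⟨s, rfl⟩ := quot_surjective c r
    obtain ⟨b, hb, rfl⟩ := ha
    exact ⟨s * b, (hL (e j)).1.2.2.2 s _ hb, (RingCon.coe_mul c s b)⟩
  · intro huniv
    apply (hL (e j)).2
    rw [Set.eq_univ_iff_forall]
    intro b
    have : ((b : c.Quotient)) ∈ (fun x : R => (x : c.Quotient)) '' L (e j) := by
      have : (fun x : R => (x : c.Quotient)) '' L (e j) = Set.univ := huniv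
      rw [this]
      trivial
    obtain ⟨a, ha, hab⟩ := this
    have hmem : a - b ∈ I := (RingCon.eq c).mp hab
    have : a - (a - b) ∈ L (e j) := by
      rw [sub_eq_add_neg]
      exact (hL (e j)).1.2.1 _ ha _ ((hL (e j)).1.2.2.1 _ (hsub _ hmem))
    rwa [sub_sub_cancel] at this
  · rw [Set.eq_univ_iff_forall]
    intro q
    obtain ⟨x, rfl⟩ := quot_surjective c q
    have : x ∈ ⋃ i, L i := by rw [hcov]; trivial
    obtain ⟨_, ⟨i, rfl⟩, hx⟩ := this
    exact Set.mem_iUnion.mpr ⟨e.symm i, ⟨x, by simpa using hx, rfl⟩⟩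

/-- The key consequence of elementarity: a two-sided ideal contained in all members of a
cover of size at most `etaL R` is zero. -/
theorem ideal_eq_zero (hR : EtaLElementary R) {ι : Type*} [Fintype ι]
    (L : ι → Set R) (hL : ∀ i, IsLeftIdeal (L i) ∧ L i ≠ Set.univ)
    (hcov : ⋃ i, L i = Set.univ) (hcard : (Fintype.card ι : ℕ∞) ≤ etaL R)
    {I : Set R} (hI : IsTS I) (hsub : ∀ i, I ⊆ L i) : I = {0} := by
  by_contra hne
  have hx : ∃ x ∈ I, x ≠ 0 := by
    by_contra hall
    push_neg at hall
    apply hne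
    ext y
    simp only [Set.mem_singleton_iff]
    exact ⟨fun hy => by by_contra h; exact h (hall y hy), fun hy => hy ▸ hI.zero⟩
  obtain ⟨x, hxI, hx0⟩ := hx
  have hlt := hR.2 (toCon hI) ⟨x, hx0, by rw [toCon_iff, sub_zero]; exact hxI⟩
  have hle := etaL_le_of_cover (hasCover_quotient hI L hL hcov hsub)
  exact absurd (lt_of_lt_of_le (lt_of_lt_of_le hlt hle) hcard) (lt_irrefl _)

theorem mem_jacobson_of_rmul_zero {x : R} (h : ∀ r : R, x * r = 0) :
    x ∈ jacobsonSet R := by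
  intro r
  refine ⟨-(r * x), ?_⟩
  have h2 : (r * x) * (r * x) = 0 := by rw [mul_assoc, h, mul_zero]
  simp [circOp, neg_mul, h2]

theorem sq_zero_qr {x : R} (h : x * x = 0) : IsLeftQuasiRegular x :=
  ⟨-x, by simp [circOp, neg_mul, h]⟩

theorem eq_singleton_zero {A : Set R} (h0 : (0:R) ∈ A) (h : ∀ x ∈ A, x = 0) : A = {0} := by
  ext y
  simp only [Set.mem_singleton_iff]
  exact ⟨fun hy => h y hy, fun hy => hy ▸ h0⟩

theorem exists_idem [Finite R] (hJ : jacobsonSet R = {0}) {A : Set R}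
    (hA : IsLeftIdeal A) (hne : A ≠ {0}) : ∃ f ∈ A, f ≠ 0 ∧ f * f = f := by
  classical
  set cand : Set (Set R) := {L | IsLeftIdeal L ∧ L ⊆ A ∧ L ≠ {0}} with hcand
  have hAc : A ∈ cand := ⟨hA, le_refl _, hne⟩
  obtain ⟨L, hLc, hmin'⟩ := Set.Finite.exists_minimalFor id cand (Set.toFinite cand) ⟨A, hAc⟩
  have hmin : ∀ L' ∈ cand, id L' ≤ id L → id L = id L' := fun L' h1 h2 => le_antisymm (hmin' h1 h2) h2
  simp only [id] at hmin
  obtain ⟨hLid, hLA, hLne⟩ := hLc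
  -- L * L ≠ 0
  have hLsq : ∃ u ∈ L, ∃ a ∈ L, u * a ≠ 0 := by
    by_contra hsq
    push_neg at hsq
    apply hLne
    refine eq_singleton_zero hLid.1 (fun x hx => ?_)
    have hxJ : x ∈ jacobsonSet R := by
      intro r
      refine sq_zero_qr ?_
      have h1 : x * (r * x) = 0 := hsq x hx (r * x) (hLid.2.2.2 r x hx)
      rw [mul_assoc, h1, mul_zero]
    rw [hJ] at hxJ
    exact hxJ
  obtain ⟨u, hu, a, ha, hua⟩ := hLsq
  have hane : a ≠ 0 := fun h => hua (by rw [h, mul_zero])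
  set La : Set R := {z | ∃ y ∈ L, z = y * a} with hLa
  have hLaid : IsLeftIdeal La := by
    refine ⟨⟨0, hLid.1, (zero_mul a).symm⟩, ?_, ?_, ?_⟩
    · rintro _ ⟨y1, hy1, rfl⟩ _ ⟨y2, hy2, rfl⟩
      exact ⟨y1 + y2, hLid.2.1 _ hy1 _ hy2, (add_mul y1 y2 a).symm⟩
    · rintro _ ⟨y, hy, rfl⟩
      exact ⟨-y, hLid.2.2.1 _ hy, (neg_mul y a).symm⟩
    · rintro r _ ⟨y, hy, rfl⟩
      exact ⟨r * y, hLid.2.2.2 r _ hy, (mul_assoc r y a).symm⟩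
  have hLaL : La ⊆ L := by
    rintro _ ⟨y, hy, rfl⟩
    exact hLid.2.2.2 y a ha
  have hLane : La ≠ {0} := by
    intro h
    have : u * a ∈ La := ⟨u, hu, rfl⟩
    rw [h] at this
    exact hua this
  have hLeq : L = La := hmin La ⟨hLaid, hLaL.trans hLA, hLane⟩ hLaL
  have haLa : a ∈ La := hLeq ▸ ha
  obtain ⟨f, hf, haf⟩ := haLa
  set Z : Set R := {y | y ∈ L ∧ y * a = 0} with hZ
  have hZid : IsLeftIdeal Z := by
    refine ⟨⟨hLid.1, zero_mul a⟩, ?_, ?_, ?_⟩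
    · rintro x ⟨hx, hx0⟩ y ⟨hy, hy0⟩
      exact ⟨hLid.2.1 _ hx _ hy, by rw [add_mul, hx0, hy0, add_zero]⟩
    · rintro x ⟨hx, hx0⟩
      exact ⟨hLid.2.2.1 _ hx, by rw [neg_mul, hx0, neg_zero]⟩
    · rintro r x ⟨hx, hx0⟩
      exact ⟨hLid.2.2.2 r _ hx, by rw [mul_assoc, hx0, mul_zero]⟩
  have hfZ : f ∉ Z := fun ⟨_, h0⟩ => hane (by rw [haf, h0])
  have hZzero : Z = {0} := by
    by_contra hZne
    have : L = Z := hmin Z ⟨hZid, (fun x hx => hLA hx.1), hZne⟩ (fun x hx => hx.1)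
    exact hfZ (this ▸ hf)
  have hffL : f * f - f ∈ Z := by
    constructor
    · rw [sub_eq_add_neg]
      exact hLid.2.1 _ (hLid.2.2.2 f f hf) _ (hLid.2.2.1 _ hf)
    · rw [sub_mul, mul_assoc, ← haf, ← haf, sub_self]
  rw [hZzero, Set.mem_singleton_iff, sub_eq_zero] at hffL
  exact ⟨f, hLA hf, fun h => hane (by rw [haf, h, zero_mul]), hffL⟩

theorem right_id_on_ideal [Finite R] (hJ : jacobsonSet R = {0}) :
    ∀ (n : ℕ) (A : Set R), IsLeftIdeal A → A.ncard ≤ n → ∃ e ∈ A, ∀ x ∈ A, x * e = x := by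
  intro n
  induction n with
  | zero =>
    intro A hA hcard
    exfalso
    have : A = ∅ := (Set.ncard_eq_zero (Set.toFinite A)).mp (Nat.le_zero.mp hcard)
    rw [this] at hA
    exact hA.1
  | succ n ih =>
    intro A hA hcard
    by_cases hA0 : A = {0}
    · refine ⟨0, hA0 ▸ rfl, fun x hx => ?_⟩
      rw [hA0, Set.mem_singleton_iff] at hx
      rw [hx, zero_mul]
    · obtain ⟨f, hfA, hf0, hff⟩ := exists_idem hJ hA hA0
      set A' : Set R := {x | x ∈ A ∧ x * f = 0} with hA'
      have hA'id : IsLeftIdeal A' := by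
        refine ⟨⟨hA.1, zero_mul f⟩, ?_, ?_, ?_⟩
        · rintro x ⟨hx, hx0⟩ y ⟨hy, hy0⟩
          exact ⟨hA.2.1 _ hx _ hy, by rw [add_mul, hx0, hy0, add_zero]⟩
        · rintro x ⟨hx, hx0⟩
          exact ⟨hA.2.2.1 _ hx, by rw [neg_mul, hx0, neg_zero]⟩
        · rintro r x ⟨hx, hx0⟩
          exact ⟨hA.2.2.2 r _ hx, by rw [mul_assoc, hx0, mul_zero]⟩
      have hfA' : f ∉ A' := fun ⟨_, h0⟩ => hf0 (by rw [← hff, h0])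
      have hss : A' ⊂ A := (Set.ssubset_iff_of_subset (fun x hx => hx.1)).mpr ⟨f, hfA, hfA'⟩
      have hlt : A'.ncard < A.ncard := Set.ncard_lt_ncard hss (Set.toFinite A)
      obtain ⟨e', he'A, he'⟩ := ih A' hA'id (by omega)
      have he'mem : e' ∈ A := he'A.1
      refine ⟨f + e' - f * e', ?_, fun x hx => ?_⟩
      · rw [sub_eq_add_neg]
        exact hA.2.1 _ (hA.2.1 _ hfA _ he'mem) _ (hA.2.2.1 _ (hA.2.2.2 f _ he'mem))
      · have hx' : x - x * f ∈ A' := by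
          refine ⟨?_, ?_⟩
          · rw [sub_eq_add_neg]
            exact hA.2.1 _ hx _ (hA.2.2.1 _ (hA.2.2.2 x f hfA))
          · rw [sub_mul, mul_assoc, hff, sub_self]
        have hxe' : x * e' - (x * f) * e' = x - x * f := by
          rw [← sub_mul]; exact he' _ hx'
        have expand : x * (f + e' - f * e') = x * f + (x * e' - (x * f) * e') := by
          rw [mul_sub, mul_add, ← mul_assoc]; abel
        rw [expand, hxe']
        abel

theorem exists_right_id [Finite R] (hJ : jacobsonSet R = {0}) :
    ∃ e : R, ∀ x : R, x * e = x := by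
  have huniv : IsLeftIdeal (Set.univ : Set R) :=
    ⟨trivial, fun _ _ _ _ => trivial, fun _ _ => trivial, fun _ _ _ => trivial⟩
  obtain ⟨e, _, he⟩ := right_id_on_ideal hJ (Set.univ : Set R).ncard Set.univ huniv le_rfl
  exact ⟨e, fun x => he x trivial⟩

end EtaAux

open scoped Pointwise in
/-- If `R` is an `η_ℓ`-elementary ring, its Jacobson radical is nonzero. -/
theorem etaL_elementary_jacobson_ne_zero {R : Type*} [NonUnitalRing R]
    (hR : EtaLElementary R) : jacobsonSet R ≠ {0} := by
  intro hJ
  classical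
  -- there exists a cover
  have hex : {k : ℕ | HasLeftIdealCover R k}.Nonempty := by
    by_contra h
    rw [Set.not_nonempty_iff_eq_empty] at h
    apply hR.1
    have hempty : {n : ℕ∞ | ∃ k : ℕ, HasLeftIdealCover R k ∧ n = (k : ℕ∞)} = ∅ := by
      ext n
      simp only [Set.mem_setOf_eq, Set.mem_empty_iff_false, iff_false, not_exists]
      rintro k ⟨hk, -⟩
      have hmem : k ∈ {k : ℕ | HasLeftIdealCover R k} := hk
      rw [h] at hmem
      exact Set.notMem_empty k hmem
    rw [etaL, hempty, sInf_empty]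
  set k₀ := sInf {k : ℕ | HasLeftIdealCover R k} with hk₀def
  have hk₀ : HasLeftIdealCover R k₀ := Nat.sInf_mem hex
  have hk₀le : (k₀ : ℕ∞) ≤ etaL R := by
    refine le_sInf ?_
    rintro n ⟨k, hk, rfl⟩
    exact Nat.cast_le.mpr (Nat.sInf_le hk)
  obtain ⟨L, hL, hcov⟩ := hk₀
  -- the left ideals as additive subgroups
  let Lg : Fin k₀ → AddSubgroup R := fun i =>
    { carrier := L i
      zero_mem' := (hL i).1.1
      add_mem' := fun {a b} ha hb => (hL i).1.2.1 a ha b hb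
      neg_mem' := fun {a} ha => (hL i).1.2.2.1 a ha }
  have hcovers : ⋃ i ∈ (Finset.univ : Finset (Fin k₀)), (0 : R) +ᵥ ((Lg i : Set R)) = Set.univ := by
    have h1 : ∀ i : Fin k₀, (0 : R) +ᵥ ((Lg i : Set R)) = L i := fun i => zero_vadd _ _
    simp only [Finset.mem_univ, Set.iUnion_true, h1]
    exact hcov
  have hfilter := AddSubgroup.leftCoset_cover_filter_FiniteIndex hcovers
  set s := Finset.univ.filter (fun i : Fin k₀ => (Lg i).FiniteIndex) with hs
  have hcov' : ⋃ i : {i // i ∈ s}, L i.1 = Set.univ := by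
    rw [← hfilter]
    rw [Set.iUnion_subtype]
    refine Set.iUnion_congr fun i => ?_
    refine Set.iUnion_congr fun hi => ?_
    exact (zero_vadd _ _).symm
  -- the intersection of the finite-index cover members
  set D : AddSubgroup R := ⨅ i : {i // i ∈ s}, Lg i.1 with hD
  have hDfin : D.FiniteIndex :=
    AddSubgroup.finiteIndex_iInf (fun i => (Finset.mem_filter.mp i.2).2)
  have hmemD : ∀ x : R, x ∈ D ↔ ∀ i : {i // i ∈ s}, x ∈ L i.1 := by
    intro x
    rw [hD, AddSubgroup.mem_iInf]
    rfl
  have hDl : ∀ (r x : R), x ∈ D → r * x ∈ D := by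
    intro r x hx
    rw [hmemD] at hx ⊢
    exact fun i => (hL i.1).1.2.2.2 r x (hx i)
  -- the two-sided ideal C
  set C : Set R := {x : R | x ∈ D ∧ ∀ r : R, x * r ∈ D} with hC
  have hCts : EtaAux.IsTS C := by
    constructor
    · exact ⟨D.zero_mem, fun r => by rw [zero_mul]; exact D.zero_mem⟩
    · rintro a ⟨ha1, ha2⟩ b ⟨hb1, hb2⟩
      exact ⟨D.add_mem ha1 hb1, fun r => by rw [add_mul]; exact D.add_mem (ha2 r) (hb2 r)⟩
    · rintro a ⟨ha1, ha2⟩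
      exact ⟨D.neg_mem ha1, fun r => by rw [neg_mul]; exact D.neg_mem (ha2 r)⟩
    · rintro r a ⟨ha1, ha2⟩
      exact ⟨hDl r a ha1, fun t => by rw [mul_assoc]; exact hDl r _ (ha2 t)⟩
    · rintro a ⟨ha1, ha2⟩ r
      exact ⟨ha2 r, fun t => by rw [mul_assoc]; exact ha2 (r * t)⟩
  have hCsub : ∀ i : {i // i ∈ s}, C ⊆ L i.1 := fun i x hx => (hmemD x).mp hx.1 i
  have hcard : ((Fintype.card {i // i ∈ s} : ℕ) : ℕ∞) ≤ etaL R := by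
    refine le_trans (Nat.cast_le.mpr ?_) hk₀le
    rw [Fintype.card_coe]
    calc s.card ≤ (Finset.univ : Finset (Fin k₀)).card := Finset.card_le_univ s
    _ = k₀ := by rw [Finset.card_univ, Fintype.card_fin]
  have hC0 : C = {0} :=
    EtaAux.ideal_eq_zero hR (fun i : {i // i ∈ s} => L i.1) (fun i => hL i.1) hcov' hcard
      hCts hCsub
  -- every x with xR ⊆ D is zero
  have hK : ∀ x : R, (∀ r : R, x * r ∈ D) → x = 0 := by
    intro x hx
    have hS : ∀ r : R, x * r = 0 := by
      intro r
      have hmem : x * r ∈ C := ⟨hx r, fun t => by rw [mul_assoc]; exact hx (r * t)⟩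
      rwa [hC0, Set.mem_singleton_iff] at hmem
    have hxJ := EtaAux.mem_jacobson_of_rmul_zero hS
    rwa [hJ, Set.mem_singleton_iff] at hxJ
  -- R is finite
  haveI : D.FiniteIndex := hDfin
  haveI : Finite (R ⧸ D) := AddSubgroup.finite_quotient_of_finiteIndex
  let f : R → ((R ⧸ D) → (R ⧸ D)) := fun x q =>
    Quotient.liftOn' q (fun r => ((x * r : R) : R ⧸ D)) (by
      intro r1 r2 h
      have h' : -r1 + r2 ∈ D := QuotientAddGroup.leftRel_apply.mp h
      have hxd : x * (-r1 + r2) ∈ D := hDl x _ h'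
      have heq : -(x * r1) + x * r2 = x * (-r1 + r2) := by rw [mul_add, mul_neg]
      exact (QuotientAddGroup.eq (s := D)).mpr (heq ▸ hxd))
  have hfinj : Function.Injective f := by
    intro x y hxy
    have hxr : ∀ r : R, (x - y) * r ∈ D := by
      intro r
      have h2 : ((x * r : R) : R ⧸ D) = ((y * r : R) : R ⧸ D) := congrFun hxy ((r : R) : R ⧸ D)
      have h3 : -(x * r) + y * r ∈ D := (QuotientAddGroup.eq (s := D)).mp h2
      have h4 : -((x - y) * r) = -(x * r) + y * r := by rw [sub_mul]; abel
      have h5 := D.neg_mem (h4 ▸ h3)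
      rwa [neg_neg] at h5
    exact sub_eq_zero.mp (hK (x - y) hxr)
  haveI : Finite R := Finite.of_injective f hfinj
  -- a right identity exists, contradicting the cover
  obtain ⟨e, he⟩ := EtaAux.exists_right_id hJ
  have heU : e ∈ ⋃ i, L i := hcov ▸ Set.mem_univ e
  obtain ⟨_, ⟨i, rfl⟩, hei⟩ := heU
  apply (hL i).2
  rw [Set.eq_univ_iff_forall]
  intro x
  have hxe := (hL i).1.2.2.2 x e hei
  rwa [he x] at hxe
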